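/- Let T^J(E) = t'_n(E)·t'_{n−1}(E)⋯t'_1(E) be the transfer matrix of the inverted chain, where t'_k(E) = [[C_{n+1−k}⁻¹(E·I_m − A_{n+1−k}), −C_{n+1−k}⁻¹·B_{n+1−k}], [I_m, 0]] (i.e. the chain with data A'_k = A_{n+1−k}, B'_k = C_{n+1−k}, C'_k = B_{n+1−k}). Let σ_x be the 2m×2m block matrix [[0, I_m],[I_m, 0]]. Then for every E ∈ ℂ, T(E)⁻¹ = σ_x·T^J(E)·σ_x. -/
import Mathlib


open Matrix

noncomputable def tstep {m : ℕ} (A B C : Matrix (Fin m) (Fin m) ℂ) (E : ℂ) :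
    Matrix (Fin m ⊕ Fin m) (Fin m ⊕ Fin m) ℂ :=
  Matrix.fromBlocks (B⁻¹ * (E • 1 - A)) (-(B⁻¹ * C)) 1 0

/-- The transfer matrix `T(E) = t_n(E) ⋯ t_1(E)` (0-indexed: `t_{n-1} ⋯ t_0`). -/
noncomputable def transfer {n m : ℕ} (A B C : Fin n → Matrix (Fin m) (Fin m) ℂ) (E : ℂ) :
    Matrix (Fin m ⊕ Fin m) (Fin m ⊕ Fin m) ℂ :=
  ((List.ofFn fun k : Fin n => tstep (A k) (B k) (C k) E).reverse).prod

lemma sigma_conj_tstep {m : ℕ} (A B C : Matrix (Fin m) (Fin m) ℂ) (E : ℂ)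
    (hB : IsUnit B) (hC : IsUnit C) :
    tstep A B C E *
      (Matrix.fromBlocks 0 1 1 0 * tstep A C B E * Matrix.fromBlocks 0 1 1 0) = 1 ∧
    (Matrix.fromBlocks 0 1 1 0 * tstep A C B E * Matrix.fromBlocks 0 1 1 0) *
      tstep A B C E = 1 := by
  have hBd : B * B⁻¹ = 1 := Matrix.mul_nonsing_inv _ ((Matrix.isUnit_iff_isUnit_det _).mp hB)
  have hCd : C * C⁻¹ = 1 := Matrix.mul_nonsing_inv _ ((Matrix.isUnit_iff_isUnit_det _).mp hC)
  have h1 : B⁻¹ * C * (C⁻¹ * B) = 1 := by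
    rw [Matrix.mul_assoc, ← Matrix.mul_assoc C, hCd, Matrix.one_mul,
      Matrix.nonsing_inv_mul _ ((Matrix.isUnit_iff_isUnit_det _).mp hB)]
  have h2 : C⁻¹ * B * (B⁻¹ * C) = 1 := by
    rw [Matrix.mul_assoc, ← Matrix.mul_assoc B, hBd, Matrix.one_mul,
      Matrix.nonsing_inv_mul _ ((Matrix.isUnit_iff_isUnit_det _).mp hC)]
  have h3 : ∀ D : Matrix (Fin m) (Fin m) ℂ, B⁻¹ * C * (C⁻¹ * D) = B⁻¹ * D := by
    intro D
    rw [Matrix.mul_assoc, ← Matrix.mul_assoc C, hCd, Matrix.one_mul]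
  have h4 : ∀ D : Matrix (Fin m) (Fin m) ℂ, C⁻¹ * B * (B⁻¹ * D) = C⁻¹ * D := by
    intro D
    rw [Matrix.mul_assoc, ← Matrix.mul_assoc B, hBd, Matrix.one_mul]
  constructor <;>
  · simp only [tstep, Matrix.fromBlocks_multiply, Matrix.mul_one, Matrix.one_mul,
      Matrix.mul_zero, Matrix.zero_mul, Matrix.mul_neg, Matrix.neg_mul, neg_neg,
      add_zero, zero_add, neg_zero, h1, h2, h3, h4, Matrix.mul_assoc]
    rw [← Matrix.fromBlocks_one]
    simp [h1, h2, h3 (E • 1 - A), h4 (E • 1 - A), ← Matrix.mul_assoc]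

lemma prod_rev_inv {α : Type*} [Monoid α] :
    ∀ {n : ℕ} (u w : Fin n → α), (∀ k, u k * w k = 1) → (∀ k, w k * u k = 1) →
      (List.ofFn u).reverse.prod * (List.ofFn w).prod = 1 := by
  intro n
  induction n with
  | zero => intro u w _ _; simp
  | succ n ih =>
    intro u w h1 h2
    rw [List.ofFn_succ, List.ofFn_succ, List.reverse_cons, List.prod_append, List.prod_cons,
      List.prod_cons]
    simp only [List.prod_nil, mul_one]
    rw [mul_assoc, ← mul_assoc (u 0), h1 0, one_mul]
    exact ih _ _ (fun k => h1 k.succ) (fun k => h2 k.succ)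

lemma ofFn_rev_reverse {α : Type*} {n : ℕ} (f : Fin n → α) :
    (List.ofFn fun k : Fin n => f k.rev).reverse = List.ofFn f := by
  apply List.ext_getElem
  · simp
  · intro i h1 h2
    simp only [List.getElem_reverse, List.getElem_ofFn]
    congr 1
    simp only [List.length_reverse, List.length_ofFn] at h1 ⊢
    ext
    simp [Fin.rev]
    omega

lemma conj_prod {α : Type*} [Monoid α] (σ : α) (hσ : σ * σ = 1) :
    ∀ L : List α, σ * L.prod * σ = (L.map fun x => σ * x * σ).prod := by
  intro L
  induction L with
  | nil => simpa using hσ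
  | cons a L ih =>
    rw [List.map_cons, List.prod_cons, List.prod_cons, ← ih]
    simp only [mul_assoc]
    rw [← mul_assoc σ σ (L.prod * σ), hσ, one_mul]

/-- `T(E)⁻¹ = σ_x · T^J(E) · σ_x` where `T^J(E)` is the transfer matrix of the
inverted chain `A'_k = A_{n+1-k}`, `B'_k = C_{n+1-k}`, `C'_k = B_{n+1-k}`. -/
theorem stmt2 {n m : ℕ} (hn : 2 ≤ n) (hm : 1 ≤ m)
    (A B C : Fin n → Matrix (Fin m) (Fin m) ℂ)
    (hB : ∀ k, IsUnit (B k)) (hC : ∀ k, IsUnit (C k)) (E : ℂ) :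
    (transfer A B C E)⁻¹ =
      Matrix.fromBlocks 0 1 1 0 *
        transfer (fun k => A k.rev) (fun k => C k.rev) (fun k => B k.rev) E *
        Matrix.fromBlocks 0 1 1 0 := by
  set σ : Matrix (Fin m ⊕ Fin m) (Fin m ⊕ Fin m) ℂ := Matrix.fromBlocks 0 1 1 0 with hσdef
  have hσ : σ * σ = 1 := by
    rw [hσdef]
    simp [Matrix.fromBlocks_multiply, ← Matrix.fromBlocks_one]
  apply Matrix.inv_eq_right_inv
  unfold transfer
  rw [ofFn_rev_reverse (fun k => tstep (A k) (C k) (B k) E)]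
  rw [conj_prod σ hσ, List.map_ofFn]
  exact prod_rev_inv _ _
    (fun k => (sigma_conj_tstep (A k) (B k) (C k) E (hB k) (hC k)).1)
    (fun k => (sigma_conj_tstep (A k) (B k) (C k) E (hB k) (hC k)).2)
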